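/- arXiv:2211.15548 — 3 statements merged into one kernel-verified Lean document; each statement's English description precedes it below -/
import Mathlib

section
/- Let H be a finite dimensional complex Hilbert space and A ∈ B(H) a contraction (‖A‖ ≤ 1). Then there exists an orthogonal decomposition H = H₀ ⊕ H₁, reducing for A, such that A restricted to H₁ is unitary and the powers of A restricted to H₀ converge to 0. -/
open Filter Topology

section aux
variable {H : Type*} [NormedAddCommGroup H] [InnerProductSpace ℂ H]

lemma contraction_add_norm_eq (T : H →L[ℂ] H) (hT : ∀ z : H, ‖T z‖ ≤ ‖z‖)
    {x y : H} (hx : ‖T x‖ = ‖x‖) (hy : ‖T y‖ = ‖y‖) : ‖T (x + y)‖ = ‖x + y‖ := by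
  have par1 := parallelogram_law_with_norm ℂ (T x) (T y)
  have par2 := parallelogram_law_with_norm ℂ x y
  have h1 : ‖T (x + y)‖ ≤ ‖x + y‖ := hT _
  have h2 : ‖T (x - y)‖ ≤ ‖x - y‖ := hT _
  have e1 : T (x + y) = T x + T y := by simp
  have e2 : T (x - y) = T x - T y := by simp [map_sub]
  rw [e1] at h1; rw [e2] at h2
  have hle1 : ‖T x + T y‖ * ‖T x + T y‖ ≤ ‖x + y‖ * ‖x + y‖ :=
    mul_self_le_mul_self (norm_nonneg _) h1
  have hle2 : ‖T x - T y‖ * ‖T x - T y‖ ≤ ‖x - y‖ * ‖x - y‖ :=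
    mul_self_le_mul_self (norm_nonneg _) h2
  have heq : ‖T x + T y‖ * ‖T x + T y‖ = ‖x + y‖ * ‖x + y‖ := by
    rw [hx, hy] at par1; linarith
  rw [e1]
  exact (mul_self_inj (norm_nonneg _) (norm_nonneg _)).mp heq

variable [FiniteDimensional ℂ H]

lemma contraction_adjoint_apply (A : H →L[ℂ] H) (hA : ‖A‖ ≤ 1) {v : H}
    (hv : ‖A v‖ = ‖v‖) : (ContinuousLinearMap.adjoint A) (A v) = v := by
  set a := (ContinuousLinearMap.adjoint A) (A v) with ha
  have hsq : ‖a - v‖ ^ 2 = ‖a‖ ^ 2 - 2 * RCLike.re (inner ℂ a v : ℂ) + ‖v‖ ^ 2 :=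
    norm_sub_sq (𝕜 := ℂ) a v
  have hinner : (inner ℂ a v : ℂ) = inner ℂ (A v) (A v) := by
    rw [ha, ContinuousLinearMap.adjoint_inner_left]
  have hre : RCLike.re (inner ℂ a v : ℂ) = ‖v‖ ^ 2 := by
    rw [hinner, inner_self_eq_norm_sq, hv]
  have hna : ‖a‖ ≤ ‖v‖ := by
    calc ‖a‖ ≤ ‖ContinuousLinearMap.adjoint A‖ * ‖A v‖ :=
          (ContinuousLinearMap.adjoint A).le_opNorm _
    _ ≤ 1 * ‖v‖ := by
        rw [hv]
        exact mul_le_mul_of_nonneg_right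
          (by rw [ContinuousLinearMap.adjoint.norm_map]; exact hA) (norm_nonneg _)
    _ = ‖v‖ := one_mul _
  have h0 : ‖a - v‖ ^ 2 ≤ 0 := by nlinarith [norm_nonneg a, norm_nonneg v]
  have h1 : ‖a - v‖ = 0 := by nlinarith [norm_nonneg (a - v), sq_nonneg ‖a - v‖]
  exact sub_eq_zero.mp (norm_eq_zero.mp h1)

end aux

/-- A contraction on a finite dimensional Hilbert space decomposes as the direct sum of a
unitary operator and an operator whose powers tend to `0`. -/
theorem contraction_unitary_cnu_decomposition
    {H : Type*} [NormedAddCommGroup H] [InnerProductSpace ℂ H] [FiniteDimensional ℂ H]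
    (A : H →L[ℂ] H) (hA : ‖A‖ ≤ 1) :
    ∃ M : Submodule ℂ H,
      (∀ x ∈ M, A x ∈ M) ∧ (∀ x ∈ Mᗮ, A x ∈ Mᗮ) ∧
      (∀ x ∈ M, ‖A x‖ = ‖x‖) ∧ (∀ y ∈ M, ∃ x ∈ M, A x = y) ∧
      (∀ x ∈ Mᗮ, Tendsto (fun n : ℕ => (A ^ n) x) atTop (𝓝 0)) := by
  have hmul : ∀ (n : ℕ) (z : H), (A ^ (n + 1)) z = (A ^ n) (A z) := by
    intro n z
    rw [pow_succ, ContinuousLinearMap.mul_apply]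
  have hmul' : ∀ (n : ℕ) (z : H), (A ^ (n + 1)) z = A ((A ^ n) z) := by
    intro n z
    rw [pow_succ', ContinuousLinearMap.mul_apply]
  have hAle : ∀ z : H, ‖A z‖ ≤ ‖z‖ := by
    intro z
    calc ‖A z‖ ≤ ‖A‖ * ‖z‖ := A.le_opNorm z
    _ ≤ 1 * ‖z‖ := mul_le_mul_of_nonneg_right hA (norm_nonneg _)
    _ = ‖z‖ := one_mul _
  have hpow : ∀ (n : ℕ) (z : H), ‖(A ^ n) z‖ ≤ ‖z‖ := by
    intro n
    induction n with
    | zero => intro z; simp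
    | succ n ih =>
      intro z
      rw [hmul]
      exact (ih (A z)).trans (hAle z)
  set M : Submodule ℂ H :=
    { carrier := {x | ∀ n : ℕ, ‖(A ^ n) x‖ = ‖x‖}
      add_mem' := by
        intro x y hx hy n
        exact contraction_add_norm_eq (A ^ n) (hpow n) (hx n) (hy n)
      zero_mem' := by intro n; simp
      smul_mem' := by
        intro c x hx n
        simp only [Set.mem_setOf_eq] at hx ⊢
        rw [map_smul, norm_smul, norm_smul, hx n] } with hM
  have hmem : ∀ x : H, x ∈ M ↔ ∀ n : ℕ, ‖(A ^ n) x‖ = ‖x‖ := fun x => Iff.rfl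
  have hiso : ∀ x ∈ M, ‖A x‖ = ‖x‖ := by
    intro x hx
    have h := (hmem x).mp hx 1
    rwa [pow_one] at h
  have hMinv : ∀ x ∈ M, A x ∈ M := by
    intro x hx n
    rw [← hmul, (hmem x).mp hx (n + 1), ← hiso x hx]
  have hsurj : ∀ y ∈ M, ∃ x ∈ M, A x = y := by
    intro y hy
    set f : M →ₗ[ℂ] M :=
      (A : H →ₗ[ℂ] H).restrict (p := M) (q := M) (fun x hx => hMinv x hx) with hf
    have hinj : Function.Injective f := by
      intro a b hab
      have h1 : A (a : H) = A (b : H) := congrArg Subtype.val hab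
      have hz : A ((a : H) - (b : H)) = 0 := by rw [map_sub, h1, sub_self]
      have hmem' : (a : H) - (b : H) ∈ M := M.sub_mem a.2 b.2
      have h2 := hiso _ hmem'
      rw [hz, norm_zero] at h2
      exact Subtype.ext (sub_eq_zero.mp (norm_eq_zero.mp h2.symm))
    have hsur : Function.Surjective f := LinearMap.injective_iff_surjective.mp hinj
    obtain ⟨x, hx⟩ := hsur ⟨y, hy⟩
    exact ⟨(x : H), x.2, congrArg Subtype.val hx⟩
  have hOrth : ∀ x ∈ Mᗮ, A x ∈ Mᗮ := by
    intro x hx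
    rw [Submodule.mem_orthogonal]
    intro m hm
    obtain ⟨m', hm', hm'eq⟩ := hsurj m hm
    have key : (inner ℂ m (A x) : ℂ) = inner ℂ m' x := by
      rw [← hm'eq, ← ContinuousLinearMap.adjoint_inner_left,
        contraction_adjoint_apply A hA (hiso m' hm')]
    rw [key]
    exact hx m' hm'
  refine ⟨M, hMinv, hOrth, hiso, hsurj, ?_⟩
  intro x hx
  have hxpow : ∀ n : ℕ, (A ^ n) x ∈ Mᗮ := by
    intro n
    induction n with
    | zero => simpa using hx
    | succ n ih => rw [hmul']; exact hOrth _ ih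
  set r : ℕ → ℝ := fun n => ‖(A ^ n) x‖ with hr
  have hanti : Antitone r := by
    apply antitone_nat_of_succ_le
    intro n
    simp only [hr]
    rw [hmul']
    exact hAle _
  have hbdd : BddBelow (Set.range r) := ⟨0, by rintro _ ⟨n, rfl⟩; exact norm_nonneg _⟩
  set c : ℝ := ⨅ n, r n with hc
  have hrc : Tendsto r atTop (𝓝 c) := tendsto_atTop_ciInf hanti hbdd
  have hbound : ∀ n, (A ^ n) x ∈ Metric.closedBall (0 : H) ‖x‖ := by
    intro n
    rw [Metric.mem_closedBall, dist_zero_right]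
    exact hpow n x
  have hcpt : IsCompact (Metric.closedBall (0 : H) ‖x‖) := isCompact_closedBall 0 ‖x‖
  obtain ⟨y, -, φ, hφ, hconv⟩ := hcpt.tendsto_subseq hbound
  have hyOrth : y ∈ Mᗮ := by
    have hcl : IsClosed (Mᗮ : Set H) := Mᗮ.closed_of_finiteDimensional
    exact hcl.mem_of_tendsto hconv (Filter.Eventually.of_forall fun k => hxpow (φ k))
  have hnorm_y : ∀ m : ℕ, ‖(A ^ m) y‖ = c := by
    intro m
    have h1 : Tendsto (fun k => (A ^ m) ((A ^ (φ k)) x)) atTop (𝓝 ((A ^ m) y)) :=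
      ((A ^ m).continuous.tendsto y).comp hconv
    have h2 : Tendsto (fun k => ‖(A ^ m) ((A ^ (φ k)) x)‖) atTop (𝓝 ‖(A ^ m) y‖) :=
      (continuous_norm.tendsto _).comp h1
    have heq : ∀ k, ‖(A ^ m) ((A ^ (φ k)) x)‖ = r (m + φ k) := by
      intro k
      simp only [hr]
      congr 1
      rw [pow_add, ContinuousLinearMap.mul_apply]
    have htop : Tendsto (fun k => m + φ k) atTop atTop :=
      tendsto_atTop_mono (fun k => (hφ.le_apply).trans (Nat.le_add_left (φ k) m))
        tendsto_id
    have h3 : Tendsto (fun k => r (m + φ k)) atTop (𝓝 c) := hrc.comp htop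
    exact tendsto_nhds_unique (h2.congr (fun k => heq k)) h3
  have hny : ‖y‖ = c := by simpa using hnorm_y 0
  have hyM : y ∈ M := by
    intro m
    rw [hnorm_y m, hny]
  have hy0 : y = 0 := by
    have h := Submodule.inner_right_of_mem_orthogonal hyM hyOrth
    rwa [inner_self_eq_zero] at h
  have hc0 : c = 0 := by rw [← hny, hy0, norm_zero]
  rw [hc0] at hrc
  exact tendsto_zero_iff_norm_tendsto_zero.mpr hrc
end

section
/- Let A, B be contractions on finite dimensional Hilbert spaces H₁, H₂ and let X : H₁ → H₂ be a bounded operator with B* X A = X. Write A = A₀ ⊕ U on H₁ = M₁^⊥ ⊕ M₁ with U unitary and A₀ⁿ → 0, and B = B₀ ⊕ V on H₂ = M₂^⊥ ⊕ M₂ with V unitary and B₀ⁿ → 0. Then X vanishes on M₁^⊥ and its range is contained in M₂, i.e., X = X P_{M₁} = P_{M₂} X. -/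
open ContinuousLinearMap Filter Topology

/-- Let `A`, `B` be contractions on finite dimensional Hilbert spaces, decomposed as
`A = A₀ ⊕ U` on `M₁ᗮ ⊕ M₁` and `B = B₀ ⊕ V` on `M₂ᗮ ⊕ M₂`, with `U`, `V` unitary and
`A₀ⁿ → 0`, `B₀ⁿ → 0`.  If `B* X A = X`, then `X` vanishes on `M₁ᗮ` and has range in `M₂`. -/
theorem intertwiner_supported_on_unitary_parts
    {H₁ H₂ : Type*} [NormedAddCommGroup H₁] [InnerProductSpace ℂ H₁] [FiniteDimensional ℂ H₁]
    [NormedAddCommGroup H₂] [InnerProductSpace ℂ H₂] [FiniteDimensional ℂ H₂]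
    (A : H₁ →L[ℂ] H₁) (B : H₂ →L[ℂ] H₂) (X : H₁ →L[ℂ] H₂)
    (hA : ‖A‖ ≤ 1) (hB : ‖B‖ ≤ 1)
    (M₁ : Submodule ℂ H₁) (M₂ : Submodule ℂ H₂)
    -- `M₁` reduces `A`, `A|_{M₁}` is unitary and `(A|_{M₁ᗮ})ⁿ → 0`
    (hAM : ∀ x ∈ M₁, A x ∈ M₁) (hAM' : ∀ x ∈ M₁ᗮ, A x ∈ M₁ᗮ)
    (hAiso : ∀ x ∈ M₁, ‖A x‖ = ‖x‖) (hAsurj : ∀ y ∈ M₁, ∃ x ∈ M₁, A x = y)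
    (hAcnu : ∀ x ∈ M₁ᗮ, Tendsto (fun n : ℕ => (A ^ n) x) atTop (𝓝 0))
    -- `M₂` reduces `B`, `B|_{M₂}` is unitary and `(B|_{M₂ᗮ})ⁿ → 0`
    (hBM : ∀ x ∈ M₂, B x ∈ M₂) (hBM' : ∀ x ∈ M₂ᗮ, B x ∈ M₂ᗮ)
    (hBiso : ∀ x ∈ M₂, ‖B x‖ = ‖x‖) (hBsurj : ∀ y ∈ M₂, ∃ x ∈ M₂, B x = y)
    (hBcnu : ∀ x ∈ M₂ᗮ, Tendsto (fun n : ℕ => (B ^ n) x) atTop (𝓝 0))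
    (hX : (adjoint B).comp (X.comp A) = X) :
    (∀ x ∈ M₁ᗮ, X x = 0) ∧ (∀ x : H₁, X x ∈ M₂) := by

  classical
  -- iterate the intertwining relation
  have key : ∀ n : ℕ, ∀ x : H₁, ((adjoint B) ^ n) (X ((A ^ n) x)) = X x := by
    intro n
    induction n with
    | zero => intro x; simp
    | succ n ih =>
      intro x
      have hXx := congrFun (congrArg DFunLike.coe hX) ((A ^ n) x)
      simp only [coe_comp', Function.comp_apply] at hXx
      rw [pow_succ (adjoint B) n, pow_succ' A n]
      simp only [ContinuousLinearMap.mul_apply]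
      rw [hXx]
      exact ih x
  have hApow : ∀ (n : ℕ) (x : H₁), ‖(A ^ n) x‖ ≤ ‖x‖ := by
    intro n
    induction n with
    | zero => intro x; simp
    | succ n ih =>
      intro x
      rw [pow_succ]
      calc ‖(A ^ n) (A x)‖ ≤ ‖A x‖ := ih _
        _ ≤ ‖A‖ * ‖x‖ := A.le_opNorm x
        _ ≤ 1 * ‖x‖ := mul_le_mul_of_nonneg_right hA (norm_nonneg x)
        _ = ‖x‖ := one_mul _
  have hBadj : ‖adjoint B‖ ≤ 1 := by
    calc ‖adjoint B‖ = ‖B‖ := adjoint.norm_map B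
      _ ≤ 1 := hB
  have hBpow : ∀ (n : ℕ) (y : H₂), ‖((adjoint B) ^ n) y‖ ≤ ‖y‖ := by
    intro n
    induction n with
    | zero => intro y; simp
    | succ n ih =>
      intro y
      rw [pow_succ]
      calc ‖((adjoint B) ^ n) (adjoint B y)‖ ≤ ‖adjoint B y‖ := ih _
        _ ≤ ‖adjoint B‖ * ‖y‖ := (adjoint B).le_opNorm y
        _ ≤ 1 * ‖y‖ := mul_le_mul_of_nonneg_right hBadj (norm_nonneg y)
        _ = ‖y‖ := one_mul _
  constructor
  · intro x hx
    have hb : ∀ n : ℕ, ‖X x‖ ≤ ‖X‖ * ‖(A ^ n) x‖ := by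
      intro n
      calc ‖X x‖ = ‖((adjoint B) ^ n) (X ((A ^ n) x))‖ := by rw [key n x]
        _ ≤ ‖X ((A ^ n) x)‖ := hBpow n _
        _ ≤ ‖X‖ * ‖(A ^ n) x‖ := X.le_opNorm _
    have hlim : Tendsto (fun n : ℕ => ‖X‖ * ‖(A ^ n) x‖) atTop (𝓝 0) := by
      have h := (hAcnu x hx).norm
      simp only [norm_zero] at h
      simpa using h.const_mul ‖X‖
    have hle : ‖X x‖ ≤ 0 := ge_of_tendsto' hlim hb
    exact norm_le_zero_iff.mp hle
  · intro x
    rw [← Submodule.orthogonal_orthogonal M₂, Submodule.mem_orthogonal]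
    intro z hz
    have hadj : ∀ n : ℕ, (adjoint B) ^ n = adjoint (B ^ n) := by
      intro n
      simp [← star_eq_adjoint, star_pow]
    have hconst : ∀ n : ℕ, (inner ℂ z (X x) : ℂ) = inner ℂ ((B ^ n) z) (X ((A ^ n) x)) := by
      intro n
      rw [← key n x, hadj n, adjoint_inner_right]
    have hb : ∀ n : ℕ, ‖(inner ℂ z (X x) : ℂ)‖ ≤ ‖(B ^ n) z‖ * (‖X‖ * ‖x‖) := by
      intro n
      rw [hconst n]
      calc ‖(inner ℂ ((B ^ n) z) (X ((A ^ n) x)) : ℂ)‖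
          ≤ ‖(B ^ n) z‖ * ‖X ((A ^ n) x)‖ := norm_inner_le_norm _ _
        _ ≤ ‖(B ^ n) z‖ * (‖X‖ * ‖x‖) := by
            refine mul_le_mul_of_nonneg_left ?_ (norm_nonneg _)
            calc ‖X ((A ^ n) x)‖ ≤ ‖X‖ * ‖(A ^ n) x‖ := X.le_opNorm _
              _ ≤ ‖X‖ * ‖x‖ := mul_le_mul_of_nonneg_left (hApow n x) (norm_nonneg _)
    have hlim : Tendsto (fun n : ℕ => ‖(B ^ n) z‖ * (‖X‖ * ‖x‖)) atTop (𝓝 0) := by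
      have h := (hBcnu z hz).norm
      simp only [norm_zero] at h
      simpa using h.mul_const (‖X‖ * ‖x‖)
    have hle : ‖(inner ℂ z (X x) : ℂ)‖ ≤ 0 := ge_of_tendsto' hlim hb
    exact norm_le_zero_iff.mp hle
end

section
/- The set 𝓑 = {[[f, 0], [h, ḡ]] : f, g ∈ A(𝔻), h ∈ C(𝕋)} is a closed unital subalgebra of M₂(C(𝕋)), with product given by [[f₁,0],[h₁,ḡ₁]]·[[f₂,0],[h₂,ḡ₂]] = [[f₁f₂, 0],[h₁f₂ + ḡ₁h₂, ḡ₁ḡ₂]]; moreover 𝓑 + 𝓑* is dense in M₂(C(𝕋)). -/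
open MeasureTheory

noncomputable section

local instance : Fact (0 < (1:ℝ)) := ⟨one_pos⟩

/-- The circle. -/
abbrev 𝕋 := AddCircle (1 : ℝ)
/-- `L²(𝕋)` with respect to normalized Haar measure. -/
abbrev L2 := Lp ℂ 2 (@AddCircle.haarAddCircle 1 _)

/-- The Hardy space `H² ⊂ L²(𝕋)`: the closed span of the characters `zⁿ`, `n ≥ 0`
(the functions with vanishing negative Fourier coefficients). -/
def hardy : Submodule ℂ L2 :=
  (Submodule.span ℂ (Set.range fun n : ℕ => fourierLp 2 (n : ℤ))).topologicalClosure

instance : CompleteSpace hardy :=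
  (Submodule.isClosed_topologicalClosure _).completeSpace_coe

/-- Multiplication of an `L²` function by a continuous function. -/
def cmul (h : C(𝕋, ℂ)) (f : L2) : L2 :=
  (MemLp.toLp (fun x => h x * f.1 x)
    (by
      have hf : MemLp (f : 𝕋 → ℂ) 2 _ := Lp.memLp f
      have hh : MemLp (⇑h) ⊤ (@AddCircle.haarAddCircle 1 _) :=
        MemLp.of_bound h.continuous.aestronglyMeasurable ‖h‖
          (Filter.Eventually.of_forall fun x => h.norm_coe_le_norm x)
      simpa [smul_eq_mul, mul_comm] using hf.mul' hh))

/-- The Toeplitz operator `T_h = P ∘ M_h` on the Hardy space, for a continuous symbol `h`. -/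
def toeplitz (h : C(𝕋, ℂ)) (f : hardy) : hardy :=
  hardy.orthogonalProjectionOnto (cmul h ↑f)

/-- The disc algebra `A(𝔻) ⊂ C(𝕋)`: the uniform closure of the polynomials in `z`. -/
def discAlgebra : Subalgebra ℂ C(𝕋, ℂ) :=
  (Algebra.adjoin ℂ {fourier (T := 1) 1}).topologicalClosure
/-- The algebra `𝓑 = {[[f, 0], [h, ḡ]] : f, g ∈ A(𝔻), h ∈ C(𝕋)} ⊂ M₂(C(𝕋))`. -/
def scriptB : Set (Matrix (Fin 2) (Fin 2) C(𝕋, ℂ)) :=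
  {a | ∃ f g h : C(𝕋, ℂ), f ∈ discAlgebra ∧ g ∈ discAlgebra ∧ a = !![f, 0; h, star g]}


lemma fourier_nat_mem_discAlgebra (n : ℕ) : (fourier (T := 1) (n : ℤ)) ∈ discAlgebra := by
  have h1 : (fourier (T := 1) 1) ∈ Algebra.adjoin ℂ {fourier (T := 1) 1} :=
    Algebra.subset_adjoin rfl
  have key : (fourier (T := 1) (n : ℤ)) = (fourier (T := 1) 1) ^ n := by
    ext x
    induction n with
    | zero => simp
    | succ k ih =>
      have hcast : ((k+1 : ℕ) : ℤ) = (k : ℤ) + 1 := by push_cast; ring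
      rw [hcast, fourier_add, pow_succ]
      simp only [ContinuousMap.pow_apply, ContinuousMap.mul_apply] at ih ⊢
      rw [← ih]
  rw [key]
  exact Subalgebra.le_topologicalClosure _ (pow_mem h1 n)

lemma star_fourier_eq (n : ℤ) : star (fourier (T := 1) n) = fourier (T := 1) (-n) := by
  ext x; simp [fourier_neg]

/-- The subspace `A(𝔻) + A(𝔻)*` of `C(𝕋)`. -/
def halfPlane : Submodule ℂ C(𝕋, ℂ) where
  carrier := {u | ∃ f ∈ discAlgebra, ∃ g ∈ discAlgebra, u = f + star g}
  add_mem' := by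
    rintro u v ⟨f, hf, g, hg, rfl⟩ ⟨f', hf', g', hg', rfl⟩
    exact ⟨f + f', add_mem hf hf', g + g', add_mem hg hg', by
      rw [star_add, add_add_add_comm]⟩
  zero_mem' := ⟨0, zero_mem _, 0, zero_mem _, by simp⟩
  smul_mem' := by
    rintro c u ⟨f, hf, g, hg, rfl⟩
    refine ⟨c • f, SMulMemClass.smul_mem c hf, (starRingEnd ℂ) c • g,
      SMulMemClass.smul_mem _ hg, ?_⟩
    rw [smul_add, star_smul]
    simp [Complex.star_def]

lemma dense_halfPlane : Dense (halfPlane : Set C(𝕋, ℂ)) := by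
  have hle : Submodule.span ℂ (Set.range (fourier (T := 1))) ≤ halfPlane := by
    rw [Submodule.span_le]
    rintro _ ⟨n, rfl⟩
    rcases le_or_gt 0 n with hn | hn
    · obtain ⟨m, rfl⟩ := Int.eq_ofNat_of_zero_le hn
      exact ⟨_, fourier_nat_mem_discAlgebra m, 0, zero_mem _, by simp⟩
    · refine ⟨0, zero_mem _, fourier (T := 1) (-n), ?_, ?_⟩
      · obtain ⟨m, hm⟩ := Int.eq_ofNat_of_zero_le (by omega : (0:ℤ) ≤ -n)
        rw [hm]; exact fourier_nat_mem_discAlgebra m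
      · rw [star_fourier_eq, neg_neg, zero_add]
  have h2 := Submodule.topologicalClosure_mono hle
  rw [span_fourier_closure_eq_top] at h2
  have htop : halfPlane.topologicalClosure = ⊤ := top_le_iff.mp h2
  rw [dense_iff_closure_eq]
  have := congrArg (SetLike.coe) htop
  simpa [Submodule.topologicalClosure_coe] using this

lemma scriptB_eq_inter : scriptB =
    {a | a 0 0 ∈ discAlgebra ∧ a 0 1 = 0 ∧ star (a 1 1) ∈ discAlgebra} := by
  ext a
  constructor
  · rintro ⟨f, g, h, hf, hg, rfl⟩
    refine ⟨?_, ?_, ?_⟩ <;> simp [hf, hg]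
  · rintro ⟨h00, h01, h11⟩
    refine ⟨a 0 0, star (a 1 1), a 1 0, h00, h11, ?_⟩
    ext i j
    fin_cases i <;> fin_cases j <;> simp [h01, star_star]

/-- `𝓑` is a closed unital subalgebra of `M₂(C(𝕋))`, with the stated product formula, and
`𝓑 + 𝓑*` is dense in `M₂(C(𝕋))`. -/
theorem scriptB_closed_subalgebra_and_selfadjoint_dense :
    -- `𝓑` is closed
    IsClosed scriptB ∧
    -- `𝓑` is a unital subalgebra
    (1 ∈ scriptB) ∧
    (∀ a ∈ scriptB, ∀ b ∈ scriptB, a + b ∈ scriptB) ∧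
    (∀ (c : ℂ), ∀ a ∈ scriptB, c • a ∈ scriptB) ∧
    (∀ a ∈ scriptB, ∀ b ∈ scriptB, a * b ∈ scriptB) ∧
    -- the product formula
    (∀ f₁ g₁ h₁ f₂ g₂ h₂ : C(𝕋, ℂ),
      (!![f₁, 0; h₁, star g₁] : Matrix (Fin 2) (Fin 2) C(𝕋, ℂ)) * !![f₂, 0; h₂, star g₂] =
        !![f₁ * f₂, 0; h₁ * f₂ + star g₁ * h₂, star g₁ * star g₂]) ∧
    -- `𝓑 + 𝓑*` is dense in `M₂(C(𝕋))`
    Dense {x : Matrix (Fin 2) (Fin 2) C(𝕋, ℂ) | ∃ a ∈ scriptB, ∃ b ∈ scriptB, x = a + star b} := by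
  have hmul : ∀ f₁ g₁ h₁ f₂ g₂ h₂ : C(𝕋, ℂ),
      (!![f₁, 0; h₁, star g₁] : Matrix (Fin 2) (Fin 2) C(𝕋, ℂ)) * !![f₂, 0; h₂, star g₂] =
        !![f₁ * f₂, 0; h₁ * f₂ + star g₁ * h₂, star g₁ * star g₂] := by
    intro f₁ g₁ h₁ f₂ g₂ h₂
    rw [Matrix.mul_fin_two]
    simp
  refine ⟨?_, ?_, ?_, ?_, ?_, hmul, ?_⟩
  · -- closed
    rw [scriptB_eq_inter]
    have hA : IsClosed (discAlgebra : Set C(𝕋, ℂ)) :=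
      Subalgebra.isClosed_topologicalClosure _
    have h00 : Continuous fun a : Matrix (Fin 2) (Fin 2) C(𝕋, ℂ) => a 0 0 :=
      continuous_id.matrix_elem 0 0
    have h01 : Continuous fun a : Matrix (Fin 2) (Fin 2) C(𝕋, ℂ) => a 0 1 :=
      continuous_id.matrix_elem 0 1
    have h11 : Continuous fun a : Matrix (Fin 2) (Fin 2) C(𝕋, ℂ) => star (a 1 1) :=
      continuous_star.comp (continuous_id.matrix_elem 1 1)
    simp only [Set.setOf_and]
    exact (hA.preimage h00).inter ((isClosed_eq h01 continuous_const).inter (hA.preimage h11))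
  · -- one
    exact ⟨1, 1, 0, one_mem _, one_mem _, by rw [Matrix.one_fin_two, star_one]⟩
  · -- add
    rintro _ ⟨f₁, g₁, h₁, hf₁, hg₁, rfl⟩ _ ⟨f₂, g₂, h₂, hf₂, hg₂, rfl⟩
    refine ⟨f₁ + f₂, g₁ + g₂, h₁ + h₂, add_mem hf₁ hf₂, add_mem hg₁ hg₂, ?_⟩
    ext i j
    fin_cases i <;> fin_cases j <;> simp [Matrix.add_apply, star_add]
  · -- smul
    rintro c _ ⟨f, g, h, hf, hg, rfl⟩
    refine ⟨c • f, (starRingEnd ℂ) c • g, c • h, SMulMemClass.smul_mem _ hf,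
      SMulMemClass.smul_mem _ hg, ?_⟩
    ext i j
    fin_cases i <;> fin_cases j <;> simp [Matrix.smul_apply, star_smul, Complex.star_def]
  · -- mul
    rintro _ ⟨f₁, g₁, h₁, hf₁, hg₁, rfl⟩ _ ⟨f₂, g₂, h₂, hf₂, hg₂, rfl⟩
    refine ⟨f₁ * f₂, g₂ * g₁, h₁ * f₂ + star g₁ * h₂, mul_mem hf₁ hf₂, mul_mem hg₂ hg₁, ?_⟩
    rw [hmul, star_mul]
  · -- dense
    intro x
    set S : Set C(𝕋, ℂ) := (halfPlane : Set C(𝕋, ℂ)) with hS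
    set φ : C(𝕋, ℂ) × C(𝕋, ℂ) → Matrix (Fin 2) (Fin 2) C(𝕋, ℂ) :=
      fun p => !![p.1, x 0 1; x 1 0, p.2] with hφdef
    have hφ : Continuous φ := by
      apply continuous_matrix
      intro i j
      fin_cases i <;> fin_cases j <;> simp [hφdef] <;> fun_prop
    have hsub : φ '' (S ×ˢ S) ⊆
        {y : Matrix (Fin 2) (Fin 2) C(𝕋, ℂ) | ∃ a ∈ scriptB, ∃ b ∈ scriptB, y = a + star b} := by
      rintro _ ⟨⟨u, v⟩, ⟨⟨f₁, hf₁, f₂, hf₂, rfl⟩, ⟨g₂, hg₂, g₁, hg₁, rfl⟩⟩, rfl⟩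
      refine ⟨!![f₁, 0; x 1 0, star g₁], ⟨f₁, g₁, x 1 0, hf₁, hg₁, rfl⟩,
        !![f₂, 0; star (x 0 1), star g₂], ⟨f₂, g₂, star (x 0 1), hf₂, hg₂, rfl⟩, ?_⟩
      ext i j
      fin_cases i <;> fin_cases j <;>
        simp [hφdef, Matrix.add_apply, Matrix.star_apply, star_star, add_comm]
    have hx : (x 0 0, x 1 1) ∈ closure (S ×ˢ S) := by
      rw [closure_prod_eq]
      exact ⟨dense_halfPlane _, dense_halfPlane _⟩
    have hxeq : x = φ (x 0 0, x 1 1) := Matrix.eta_fin_two x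
    have hmem : x ∈ closure (φ '' (S ×ˢ S)) := by
      rw [hxeq]
      exact image_closure_subset_closure_image hφ ⟨_, hx, rfl⟩
    exact closure_mono hsub hmem
end
end
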